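/- Set δ₋ = exp(−‖β‖_{L^∞}·max(U₀, Λ)) and δ₊ = 1, where U₀ = ∫₀^∞ u₀(a) da and Λ = α/(μ·e). For each sign ±, let b_± : [0,∞) → ℝ be the continuous solution of the linear Volterra equation b_±(t) = α·δ_±·( exp(−μt)·∫_t^∞ β(a)·u₀(a−t) da + ∫₀^t β(a)·exp(−μa)·b_±(t−a) da ), and define u_±(t,a) = exp(−μt)·u₀(a−t) if a ≥ t and u_±(t,a) = exp(−μa)·b_±(t−a) if a ≤ t. Then for every t ≥ 0 and almost every a ≥ 0, u_−(t,a) ≤ u(t,a) ≤ u_+(t,a). -/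

import Mathlib

open MeasureTheory Filter

lemma f_le_self (x : ℝ) : x * Real.exp (-x) ≤ x := by
  rcases le_or_gt 0 x with h | h
  · have h1 : Real.exp (-x) ≤ 1 := Real.exp_le_one_iff.mpr (by linarith)
    nlinarith
  · have h1 : (1:ℝ) ≤ Real.exp (-x) := Real.one_le_exp_iff.mpr (by linarith)
    nlinarith

lemma f_le_einv (x : ℝ) : x * Real.exp (-x) ≤ Real.exp (-1) := by
  have h := Real.add_one_le_exp (x - 1)
  have hx : x ≤ Real.exp (x - 1) := by linarith
  calc x * Real.exp (-x) ≤ Real.exp (x - 1) * Real.exp (-x) :=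
        mul_le_mul_of_nonneg_right hx (Real.exp_pos _).le
    _ = Real.exp (-1) := by rw [← Real.exp_add]; ring_nf

lemma volterra_nonneg (d F : ℝ → ℝ) (C : ℝ)
    (hd : ContinuousOn d (Set.Ici 0))
    (hF : ContinuousWithinAt F (Set.Ici 0) 0) (hF0 : F 0 = 0)
    (hd0 : 0 ≤ d 0)
    (H : ∀ t0 t m : ℝ, 0 ≤ t0 → t0 ≤ t → -1 ≤ m → m ≤ 0 →
        (∀ s, 0 ≤ s → s ≤ t0 → 0 ≤ d s) →
        (∀ s, t0 ≤ s → s ≤ t → m ≤ d s) →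
        m * (C * F (t - t0)) ≤ d t) :
    ∀ t, 0 ≤ t → 0 ≤ d t := by
  by_contra hcon
  push_neg at hcon
  obtain ⟨t1, ht1, hdt1⟩ := hcon
  set S : Set ℝ := {t | 0 ≤ t ∧ d t < 0} with hS
  have hSne : S.Nonempty := ⟨t1, ht1, hdt1⟩
  have hSbd : BddBelow S := ⟨0, fun x hx => hx.1⟩
  set t0 := sInf S with ht0def
  have ht00 : 0 ≤ t0 := le_csInf hSne fun x hx => hx.1
  have hpos : ∀ s, 0 ≤ s → s ≤ t0 → 0 ≤ d s := by
    intro s hs hst0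
    rcases lt_or_eq_of_le hst0 with h | h
    · by_contra hneg
      push_neg at hneg
      exact absurd (csInf_le hSbd ⟨hs, hneg⟩) (not_le.mpr h)
    · subst h
      rcases eq_or_lt_of_le hs with h0 | h0
      · rwa [← h0]
      · by_contra hneg
        push_neg at hneg
        have hsub : Set.Ioo (t0/2) t0 ⊆ Set.Ici (0:ℝ) := fun x hx =>
          le_of_lt (lt_trans (by linarith) hx.1)
        have htend : Tendsto d (nhdsWithin t0 (Set.Ioo (t0/2) t0)) (nhds (d t0)) :=
          ((hd t0 hs).mono hsub).tendsto
        have hev : ∀ᶠ x in nhdsWithin t0 (Set.Ioo (t0/2) t0), d x < 0 :=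
          htend.eventually_lt_const hneg
        have : (nhdsWithin t0 (Set.Ioo (t0/2) t0)).NeBot :=
          right_nhdsWithin_Ioo_neBot (by linarith)
        obtain ⟨x, hx1, hx2⟩ := (hev.and self_mem_nhdsWithin).exists
        have hx0 : 0 ≤ x := le_of_lt (lt_trans (by linarith) hx2.1)
        exact absurd (csInf_le hSbd ⟨hx0, hx1⟩) (not_le.mpr hx2.2)
  have hdt0 : 0 ≤ d t0 := hpos t0 ht00 le_rfl
  -- d > -1 near t0 within Ici 0
  have hev1 : ∀ᶠ x in nhds t0, x ∈ Set.Ici (0:ℝ) → (-1:ℝ) < d x := by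
    rw [← eventually_nhdsWithin_iff]
    exact (hd t0 ht00).tendsto.eventually_const_lt (by linarith)
  obtain ⟨ε1, hε1, hb1⟩ := Metric.eventually_nhds_iff.mp hev1
  -- C * F small near 0 within Ici 0
  have hev2 : ∀ᶠ x in nhds (0:ℝ), x ∈ Set.Ici (0:ℝ) → C * F x < 1/2 := by
    rw [← eventually_nhdsWithin_iff]
    have : Tendsto (fun x => C * F x) (nhdsWithin 0 (Set.Ici 0)) (nhds (C * F 0)) :=
      (continuousWithinAt_const.mul hF).tendsto
    rw [hF0, mul_zero] at this
    exact this.eventually_lt_const (by norm_num)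
  obtain ⟨ε2, hε2, hb2⟩ := Metric.eventually_nhds_iff.mp hev2
  set ρ := min (ε1/2) (ε2/2) with hρdef
  have hρ : 0 < ρ := lt_min (by linarith) (by linarith)
  obtain ⟨t1', ht1'S, ht1'lt⟩ := exists_lt_of_csInf_lt hSne (show sInf S < t0 + ρ by
    rw [← ht0def]; linarith)
  have ht1'ge : t0 ≤ t1' := csInf_le hSbd ht1'S
  obtain ⟨ts, hts, hmin⟩ := isCompact_Icc.exists_isMinOn ⟨t0, le_rfl, ht1'ge⟩
    (hd.mono (fun x hx => le_trans ht00 hx.1))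
  set m := d ts with hmdef
  have hminle : ∀ x ∈ Set.Icc t0 t1', m ≤ d x := fun x hx => hmin hx
  have hmle : m ≤ d t1' := hminle t1' ⟨ht1'ge, le_rfl⟩
  have hmneg : m < 0 := lt_of_le_of_lt hmle ht1'S.2
  have htst0 : t0 ≤ ts := hts.1
  have hts1' : ts ≤ t1' := hts.2
  have hm1 : (-1:ℝ) < m := by
    apply hb1 _ (Set.mem_Ici.mpr (le_trans ht00 htst0))
    rw [Real.dist_eq, abs_of_nonneg (by linarith)]
    have : ρ ≤ ε1/2 := min_le_left _ _
    linarith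
  have hH := H t0 ts m ht00 htst0 hm1.le hmneg.le hpos
    (fun s hs1 hs2 => hminle s ⟨hs1, le_trans hs2 hts1'⟩)
  have hFsmall : C * F (ts - t0) < 1/2 := by
    apply hb2 _ (Set.mem_Ici.mpr (by linarith))
    rw [Real.dist_eq, sub_zero, abs_of_nonneg (by linarith)]
    have : ρ ≤ ε2/2 := min_le_right _ _
    linarith
  nlinarith [hH]

lemma conv_cont (d : ℝ → ℝ) (hd : ContinuousOn d (Set.Ici 0)) (t : ℝ) (ht : 0 ≤ t) :
    ContinuousOn (fun a => d (t - a)) (Set.Icc 0 t) :=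
  hd.comp (continuous_const.sub continuous_id).continuousOn
    (fun x hx => by
      simp only [Set.mem_Ici]; simp only [Set.mem_Icc] at hx; linarith [hx.2])

lemma conv_integrable (K d : ℝ → ℝ) (hKmeas : Measurable K) (CK : ℝ)
    (hKbd : ∀ᵐ a ∂(volume : Measure ℝ), ‖K a‖ ≤ CK)
    (hd : ContinuousOn d (Set.Ici 0)) (t : ℝ) (ht : 0 ≤ t) :
    IntervalIntegrable (fun a => K a * d (t - a)) volume 0 t := by
  obtain ⟨B, hB⟩ := isCompact_Icc.exists_bound_of_continuousOn (conv_cont d hd t ht)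
  rw [intervalIntegrable_iff_integrableOn_Ioc_of_le ht]
  have hdm : AEStronglyMeasurable (fun a => d (t - a)) (volume.restrict (Set.Ioc 0 t)) :=
    ((conv_cont d hd t ht).aestronglyMeasurable measurableSet_Icc).mono_measure
      (Measure.restrict_mono Set.Ioc_subset_Icc_self le_rfl)
  refine ⟨(hKmeas.aestronglyMeasurable.restrict).mul hdm,
    HasFiniteIntegral.restrict_of_bounded (C := CK * B) measure_Ioc_lt_top ?_⟩
  filter_upwards [ae_restrict_of_ae hKbd, ae_restrict_mem measurableSet_Ioc] with a ha hmem
  have h2 : ‖d (t - a)‖ ≤ B := hB _ (Set.mem_Icc.mpr ⟨by linarith [hmem.1], by linarith [hmem.2, hmem.1]⟩)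
  calc ‖K a * d (t - a)‖ = ‖K a‖ * ‖d (t - a)‖ := norm_mul _ _
    _ ≤ CK * B := mul_le_mul ha h2 (norm_nonneg _) (le_trans (norm_nonneg _) ha)

lemma conv_lower_bound (K d : ℝ → ℝ) (hK0 : ∀ a, 0 ≤ K a)
    (hKi : ∀ x y : ℝ, IntervalIntegrable K volume x y)
    (t0 t m : ℝ) (ht0 : 0 ≤ t0) (ht : t0 ≤ t) (hm : m ≤ 0)
    (hint : IntervalIntegrable (fun a => K a * d (t - a)) volume 0 t)
    (h1 : ∀ s, 0 ≤ s → s ≤ t0 → 0 ≤ d s)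
    (h2 : ∀ s, t0 ≤ s → s ≤ t → m ≤ d s) :
    m * ∫ a in (0:ℝ)..(t - t0), K a ≤ ∫ a in (0:ℝ)..t, K a * d (t - a) := by
  have hT : (0:ℝ) ≤ t := le_trans ht0 ht
  set g : ℝ → ℝ := (Set.Iic (t - t0)).indicator (fun a => m * K a) with hgdef
  have hKi' : IntegrableOn (fun a => m * K a) (Set.Ioc 0 t) :=
    (intervalIntegrable_iff_integrableOn_Ioc_of_le hT).mp ((hKi 0 t).const_mul m)
  have hgi : IntervalIntegrable g volume 0 t :=
    (intervalIntegrable_iff_integrableOn_Ioc_of_le hT).mpr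
      (hKi'.indicator measurableSet_Iic)
  have hptwise : ∀ x ∈ Set.Icc (0:ℝ) t, g x ≤ K x * d (t - x) := by
    intro x hx
    simp only [Set.mem_Icc] at hx
    by_cases hle : x ≤ t - t0
    · rw [hgdef, Set.indicator_of_mem (Set.mem_Iic.mpr hle)]
      have hd2 : m ≤ d (t - x) := h2 (t - x) (by linarith) (by linarith)
      calc m * K x ≤ d (t - x) * K x := mul_le_mul_of_nonneg_right hd2 (hK0 x)
        _ = K x * d (t - x) := mul_comm _ _
    · rw [hgdef, Set.indicator_of_notMem (by simpa using hle)]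
      exact mul_nonneg (hK0 x) (h1 (t - x) (by linarith) (by linarith [not_le.mp hle]))
  have hmono := intervalIntegral.integral_mono_on hT hgi hint hptwise
  have hcalc : (∫ a in (0:ℝ)..t, g a) = m * ∫ a in (0:ℝ)..(t - t0), K a := by
    rw [intervalIntegral.integral_of_le hT, intervalIntegral.integral_of_le (by linarith : (0:ℝ) ≤ t - t0)]
    rw [hgdef, setIntegral_indicator measurableSet_Iic]
    rw [Set.Ioc_inter_Iic, min_eq_right (by linarith : t - t0 ≤ t)]
    simp [MeasureTheory.integral_const_mul]
  linarith [hmono, hcalc.symm.le, hcalc.le]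

lemma shift_integrable (u₀ : ℝ → ℝ) (hu₀int : IntegrableOn u₀ (Set.Ioi 0)) (t : ℝ) :
    IntegrableOn (fun a => u₀ (a - t)) (Set.Ioi t) := by
  have hv : Integrable ((Set.Ioi (0:ℝ)).indicator u₀) volume :=
    (integrable_indicator_iff measurableSet_Ioi).mpr hu₀int
  have hvt : Integrable (fun a => (Set.Ioi (0:ℝ)).indicator u₀ (a - t)) volume :=
    hv.comp_sub_right t
  apply (hvt.integrableOn (s := Set.Ioi t)).congr_fun ?_ measurableSet_Ioi
  intro a ha
  simp only [Set.indicator_of_mem (Set.mem_Ioi.mpr (by simp only [Set.mem_Ioi] at ha; linarith : (0:ℝ) < a - t))]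

lemma shift_integral (u₀ : ℝ → ℝ) (hu₀int : IntegrableOn u₀ (Set.Ioi 0)) (t : ℝ) :
    (∫ a in Set.Ioi t, u₀ (a - t)) = ∫ a in Set.Ioi (0:ℝ), u₀ a := by
  set v := (Set.Ioi (0:ℝ)).indicator u₀ with hvdef
  have h1 : (∫ a in Set.Ioi t, u₀ (a - t)) = ∫ a in Set.Ioi t, v (a - t) := by
    apply setIntegral_congr_fun measurableSet_Ioi
    intro a ha
    simp only [Set.mem_Ioi] at ha
    show u₀ (a - t) = v (a - t)
    rw [hvdef, Set.indicator_of_mem (Set.mem_Ioi.mpr (by linarith))]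
  have h2 : (fun a => v (a - t)) = (Set.Ioi t).indicator (fun a => v (a - t)) := by
    funext a
    by_cases ha : a ∈ Set.Ioi t
    · rw [Set.indicator_of_mem ha]
    · simp only [Set.mem_Ioi, not_lt] at ha
      rw [Set.indicator_of_notMem (by simp only [Set.mem_Ioi, not_lt]; linarith), hvdef,
        Set.indicator_of_notMem (by simp only [Set.mem_Ioi, not_lt]; linarith)]
  have h3 : (∫ a in Set.Ioi t, v (a - t)) = ∫ a, v (a - t) := by
    rw [← integral_indicator measurableSet_Ioi, ← h2]
  rw [h1, h3, integral_sub_right_eq_self v t, hvdef, integral_indicator measurableSet_Ioi]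

lemma shift_weighted_bound (β u₀ : ℝ → ℝ) (hβmeas : Measurable β)
    (hu₀int : IntegrableOn u₀ (Set.Ioi 0)) (hu₀nonneg : ∀ a, 0 ≤ u₀ a)
    (hβnonneg : ∀ a, 0 ≤ β a)
    (Cβ : ℝ) (hCβ : ∀ᵐ a ∂(volume.restrict (Set.Ioi 0)), β a ≤ Cβ)
    (t : ℝ) (ht : 0 ≤ t) :
    IntegrableOn (fun a => β a * u₀ (a - t)) (Set.Ioi t) ∧
    (∫ a in Set.Ioi t, β a * u₀ (a - t)) ≤ Cβ * ∫ a in Set.Ioi (0:ℝ), u₀ a := by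
  have hsub : Set.Ioi t ⊆ Set.Ioi (0:ℝ) := Set.Ioi_subset_Ioi ht
  have hCβ' : ∀ᵐ a ∂(volume.restrict (Set.Ioi t)), β a ≤ Cβ :=
    ae_restrict_of_ae_restrict_of_subset hsub hCβ
  have hshift := shift_integrable u₀ hu₀int t
  have haesm : AEStronglyMeasurable (fun a => β a * u₀ (a - t))
      (volume.restrict (Set.Ioi t)) :=
    hβmeas.aestronglyMeasurable.restrict.mul hshift.aestronglyMeasurable
  have hint : IntegrableOn (fun a => β a * u₀ (a - t)) (Set.Ioi t) := by
    apply Integrable.mono' (hshift.const_mul Cβ) haesm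
    filter_upwards [hCβ'] with a ha
    rw [Real.norm_eq_abs, abs_mul, abs_of_nonneg (hβnonneg a), abs_of_nonneg (hu₀nonneg _)]
    exact mul_le_mul_of_nonneg_right ha (hu₀nonneg _)
  refine ⟨hint, ?_⟩
  calc (∫ a in Set.Ioi t, β a * u₀ (a - t)) ≤ ∫ a in Set.Ioi t, Cβ * u₀ (a - t) := by
        apply integral_mono_ae hint (hshift.const_mul Cβ)
        filter_upwards [hCβ'] with a ha
        exact mul_le_mul_of_nonneg_right ha (hu₀nonneg _)
    _ = Cβ * ∫ a in Set.Ioi t, u₀ (a - t) := by rw [integral_const_mul]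
    _ = Cβ * ∫ a in Set.Ioi (0:ℝ), u₀ a := by rw [shift_integral u₀ hu₀int t]
lemma exp_integral (μ : ℝ) (t : ℝ) (hμ : 0 < μ) :
    (∫ a in (0:ℝ)..t, Real.exp (-μ * a)) = (1 - Real.exp (-μ * t)) / μ := by
  have hderiv : ∀ a ∈ Set.uIcc (0:ℝ) t,
      HasDerivAt (fun x => -Real.exp (-μ * x) / μ) (Real.exp (-μ * a)) a := by
    intro a _
    have h1 : HasDerivAt (fun x : ℝ => -μ * x) (-μ) a := by
      simpa using (hasDerivAt_id a).const_mul (-μ)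
    have h2 := (Real.hasDerivAt_exp (-μ * a)).comp a h1
    have h3 := (h2.div_const μ).neg
    have h4 : (fun x => -Real.exp (-μ * x) / μ) = -fun x => (Real.exp ∘ HMul.hMul (-μ)) x / μ := by
      funext x
      simp only [Pi.neg_apply, Function.comp_apply]
      ring
    rw [h4]
    exact h3.congr_deriv (by rw [mul_neg, neg_div, neg_neg, mul_div_assoc, div_self hμ.ne', mul_one])
  rw [intervalIntegral.integral_eq_sub_of_hasDerivAt hderiv
    ((Real.continuous_exp.comp (continuous_const.mul continuous_id)).intervalIntegrable 0 t)]
  simp [Real.exp_zero]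
  ring
set_option maxHeartbeats 1000000

/-- Comparison principle: with `δ₋ = exp(-‖β‖_∞ max(U₀,Λ))` and
`δ₊ = 1`, the solutions `u₋, u₊` of the linear problems with boundary condition
`u_±(t,0) = α δ_± ∫₀^∞ β(a) u_±(t,a) da` satisfy `u₋ ≤ u ≤ u₊`. -/
theorem gurtin_maccamy_comparison
    (μ α : ℝ) (hμ : 0 < μ) (hα : 0 < α)
    (f : ℝ → ℝ) (hf : ∀ x, f x = x * Real.exp (-x))
    (β : ℝ → ℝ) (hβmeas : Measurable β) (hβnonneg : ∀ a, 0 ≤ β a)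
    (hβbdd : ∃ C : ℝ, ∀ᵐ a ∂(volume.restrict (Set.Ioi 0)), β a ≤ C)
    (hβnorm : (∫ a in Set.Ioi (0:ℝ), β a * Real.exp (-μ * a)) = 1)
    (u₀ : ℝ → ℝ) (hu₀int : IntegrableOn u₀ (Set.Ioi 0))
    (hu₀nonneg : ∀ a, 0 ≤ u₀ a)
    -- the nonlinear solution
    (b : ℝ → ℝ) (hbcont : ContinuousOn b (Set.Ici 0))
    (hb : ∀ t, 0 ≤ t →
      b t = α * f (Real.exp (-μ * t) * (∫ a in Set.Ioi t, β a * u₀ (a - t))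
        + ∫ a in (0:ℝ)..t, β a * Real.exp (-μ * a) * b (t - a)))
    (u : ℝ → ℝ → ℝ)
    (hu : ∀ t a, u t a = if t ≤ a then Real.exp (-μ * t) * u₀ (a - t)
                         else Real.exp (-μ * a) * b (t - a))
    -- the constants `U₀`, `Λ`, `δ₋`, `δ₊`
    (U₀ Λ δm δp : ℝ)
    (hU₀ : U₀ = ∫ a in Set.Ioi (0:ℝ), u₀ a)
    (hΛ : Λ = α / (μ * Real.exp 1))
    (hδm : δm = Real.exp (-(essSup β (volume.restrict (Set.Ioi 0))) * max U₀ Λ))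
    (hδp : δp = 1)
    -- the linear lower solution
    (bm : ℝ → ℝ) (hbmcont : ContinuousOn bm (Set.Ici 0))
    (hbm : ∀ t, 0 ≤ t →
      bm t = α * δm * (Real.exp (-μ * t) * (∫ a in Set.Ioi t, β a * u₀ (a - t))
        + ∫ a in (0:ℝ)..t, β a * Real.exp (-μ * a) * bm (t - a)))
    (um : ℝ → ℝ → ℝ)
    (hum : ∀ t a, um t a = if t ≤ a then Real.exp (-μ * t) * u₀ (a - t)
                           else Real.exp (-μ * a) * bm (t - a))
    -- the linear upper solution
    (bp : ℝ → ℝ) (hbpcont : ContinuousOn bp (Set.Ici 0))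
    (hbp : ∀ t, 0 ≤ t →
      bp t = α * δp * (Real.exp (-μ * t) * (∫ a in Set.Ioi t, β a * u₀ (a - t))
        + ∫ a in (0:ℝ)..t, β a * Real.exp (-μ * a) * bp (t - a)))
    (up : ℝ → ℝ → ℝ)
    (hup : ∀ t a, up t a = if t ≤ a then Real.exp (-μ * t) * u₀ (a - t)
                           else Real.exp (-μ * a) * bp (t - a)) :
    ∀ t, 0 ≤ t →
      ∀ᵐ a ∂(volume.restrict (Set.Ioi 0)),
        um t a ≤ u t a ∧ u t a ≤ up t a := by
  obtain ⟨C0, hC0⟩ := hβbdd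
  set Cβ := essSup β (volume.restrict (Set.Ioi 0)) with hCβdef
  have hbddU : IsBoundedUnder (· ≤ ·) (ae (volume.restrict (Set.Ioi (0:ℝ)))) β :=
    ⟨C0, by simpa [eventually_map] using hC0⟩
  have hCβae : ∀ᵐ a ∂(volume.restrict (Set.Ioi (0:ℝ))), β a ≤ Cβ := ae_le_essSup hbddU
  have hCβ0 : 0 ≤ Cβ := by
    have hne : (volume.restrict (Set.Ioi (0:ℝ))) ≠ 0 := by
      rw [Ne, Measure.restrict_eq_zero]
      simp [Real.volume_Ioi]
    have : (ae (volume.restrict (Set.Ioi (0:ℝ)))).NeBot := ae_neBot.mpr hne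
    obtain ⟨a, ha⟩ := hCβae.exists
    exact le_trans (hβnonneg a) ha
  have hCβvol : ∀ᵐ a ∂(volume : Measure ℝ), a ∈ Set.Ioi (0:ℝ) → β a ≤ Cβ :=
    (ae_restrict_iff' measurableSet_Ioi).mp hCβae
  -- the truncated kernel
  set Kc : ℝ → ℝ := fun a => if a ≤ 0 then 0 else β a * Real.exp (-μ * a) with hKcdef
  have hKcmeas : Measurable Kc := by
    apply Measurable.ite measurableSet_Iic measurable_const
    exact hβmeas.mul (Real.measurable_exp.comp (measurable_const.mul measurable_id))
  have hKc0 : ∀ a, 0 ≤ Kc a := by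
    intro a
    rw [hKcdef]
    dsimp only
    split
    · exact le_rfl
    · exact mul_nonneg (hβnonneg a) (Real.exp_pos _).le
  have hKcbd : ∀ᵐ a ∂(volume : Measure ℝ), ‖Kc a‖ ≤ Cβ := by
    filter_upwards [hCβvol] with a ha
    rw [Real.norm_eq_abs, abs_of_nonneg (hKc0 a), hKcdef]
    dsimp only
    split
    · exact hCβ0
    · rename_i hle
      have hapos : (0:ℝ) < a := not_le.mp hle
      have he1 : Real.exp (-μ * a) ≤ 1 := Real.exp_le_one_iff.mpr (by nlinarith)
      calc β a * Real.exp (-μ * a) ≤ Cβ * 1 :=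
            mul_le_mul (ha hapos) he1 (Real.exp_pos _).le hCβ0
        _ = Cβ := mul_one _
  have hKcint : ∀ x y : ℝ, IntervalIntegrable Kc volume x y := by
    intro x y
    rw [intervalIntegrable_iff]
    exact ⟨hKcmeas.aestronglyMeasurable.restrict,
      HasFiniteIntegral.restrict_of_bounded (C := Cβ) measure_Ioc_lt_top
        (ae_restrict_of_ae hKcbd)⟩
  have hβeint : IntegrableOn (fun a => β a * Real.exp (-μ * a)) (Set.Ioi 0) := by
    by_contra hni
    rw [integral_undef hni] at hβnorm
    norm_num at hβnorm
  have hKcIoi : IntegrableOn Kc (Set.Ioi 0) := by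
    apply hβeint.congr_fun ?_ measurableSet_Ioi
    intro a ha
    rw [hKcdef]
    dsimp only
    rw [if_neg (not_le.mpr (Set.mem_Ioi.mp ha))]
  have hKcnorm : (∫ a in Set.Ioi (0:ℝ), Kc a) = 1 := by
    rw [← hβnorm]
    apply setIntegral_congr_fun measurableSet_Ioi
    intro a ha
    rw [hKcdef]
    dsimp only
    rw [if_neg (not_le.mpr (Set.mem_Ioi.mp ha))]
  -- the primitive of the kernel
  set F : ℝ → ℝ := fun s => ∫ a in (0:ℝ)..s, Kc a with hFdef
  have hFcont : Continuous F := intervalIntegral.continuous_primitive hKcint 0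
  have hF0 : F 0 = 0 := intervalIntegral.integral_same
  have hFnn : ∀ s, 0 ≤ s → 0 ≤ F s := fun s hs =>
    intervalIntegral.integral_nonneg hs fun a _ => hKc0 a
  have hFle1 : ∀ s, 0 ≤ s → F s ≤ 1 := by
    intro s hs
    rw [hFdef]
    dsimp only
    rw [intervalIntegral.integral_of_le hs, ← hKcnorm]
    exact setIntegral_mono_set hKcIoi (Eventually.of_forall fun a => hKc0 a)
      (HasSubset.Subset.eventuallyLE Set.Ioc_subset_Ioi_self)
  have hconv : ∀ d : ℝ → ℝ, ContinuousOn d (Set.Ici 0) → ∀ t, 0 ≤ t →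
      IntervalIntegrable (fun a => Kc a * d (t - a)) volume 0 t :=
    fun d hd t ht => conv_integrable Kc d hKcmeas Cβ hKcbd hd t ht
  have heq : ∀ (d : ℝ → ℝ) (t : ℝ), 0 ≤ t →
      (∫ a in (0:ℝ)..t, β a * Real.exp (-μ * a) * d (t - a))
        = ∫ a in (0:ℝ)..t, Kc a * d (t - a) := by
    intro d t ht
    rw [intervalIntegral.integral_of_le ht, intervalIntegral.integral_of_le ht]
    apply setIntegral_congr_fun measurableSet_Ioc
    intro a ha
    rw [hKcdef]
    dsimp only
    rw [if_neg (not_le.mpr ha.1)]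
  set I₀ : ℝ → ℝ := fun t => ∫ a in Set.Ioi t, β a * u₀ (a - t) with hI₀def
  have hI₀nn : ∀ t, 0 ≤ I₀ t := fun t =>
    setIntegral_nonneg measurableSet_Ioi fun a _ => mul_nonneg (hβnonneg a) (hu₀nonneg _)
  have hU₀nn : 0 ≤ U₀ := by
    rw [hU₀]
    exact setIntegral_nonneg measurableSet_Ioi fun a _ => hu₀nonneg a
  have hΛpos : 0 < Λ := by
    rw [hΛ]
    exact div_pos hα (mul_pos hμ (Real.exp_pos 1))
  set Mx := max U₀ Λ with hMxdef
  have hMx0 : 0 ≤ Mx := le_trans hU₀nn (le_max_left _ _)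
  have hδm_eq : δm = Real.exp (-(Cβ * Mx)) := by
    rw [hδm, hCβdef, hMxdef]
    congr 1
    ring
  have hδmpos : 0 < δm := by rw [hδm_eq]; exact Real.exp_pos _
  have hδm1 : δm ≤ 1 := by
    rw [hδm_eq]
    exact Real.exp_le_one_iff.mpr (by nlinarith)
  have he1 : (1:ℝ) ≤ Real.exp 1 := by
    have := Real.add_one_le_exp (1:ℝ); linarith
  -- the three "X" functionals
  set X : ℝ → ℝ := fun t =>
    Real.exp (-μ * t) * I₀ t + ∫ a in (0:ℝ)..t, Kc a * b (t - a) with hXdef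
  set Xp : ℝ → ℝ := fun t =>
    Real.exp (-μ * t) * I₀ t + ∫ a in (0:ℝ)..t, Kc a * bp (t - a) with hXpdef
  set Xm : ℝ → ℝ := fun t =>
    Real.exp (-μ * t) * I₀ t + ∫ a in (0:ℝ)..t, Kc a * bm (t - a) with hXmdef
  have hbX : ∀ t, 0 ≤ t → b t = α * (X t * Real.exp (-(X t))) := by
    intro t ht
    rw [hb t ht, heq b t ht, hf]
  have hbpX : ∀ t, 0 ≤ t → bp t = α * Xp t := by
    intro t ht
    rw [hbp t ht, heq bp t ht, hδp, mul_one]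
  have hbmX : ∀ t, 0 ≤ t → bm t = α * δm * Xm t := by
    intro t ht
    rw [hbm t ht, heq bm t ht]
  -- a priori sup bound on b
  have hble : ∀ t, 0 ≤ t → b t ≤ α * Real.exp (-1) := by
    intro t ht
    rw [hbX t ht]
    exact mul_le_mul_of_nonneg_left (f_le_einv (X t)) hα.le
  -- upper bound on X
  have hXub : ∀ t, 0 ≤ t → X t ≤ Cβ * Mx := by
    intro t ht
    have h1 : I₀ t ≤ Cβ * U₀ := by
      rw [hI₀def, hU₀]
      exact (shift_weighted_bound β u₀ hβmeas hu₀int hu₀nonneg hβnonneg Cβ hCβae t ht).2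
    have h2 : (∫ a in (0:ℝ)..t, Kc a * b (t - a))
        ≤ Cβ * Λ * (1 - Real.exp (-μ * t)) := by
      have hg : IntervalIntegrable
          (fun a => Cβ * (α * Real.exp (-1)) * Real.exp (-μ * a)) volume 0 t :=
        Continuous.intervalIntegrable
          (continuous_const.mul
            (Real.continuous_exp.comp (continuous_const.mul continuous_id))) 0 t
      have hae : (fun a => Kc a * b (t - a)) ≤ᶠ[ae (volume.restrict (Set.Icc 0 t))]
          (fun a => Cβ * (α * Real.exp (-1)) * Real.exp (-μ * a)) := by
        filter_upwards [ae_restrict_of_ae hCβvol, ae_restrict_mem measurableSet_Icc]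
          with a hA hmem
        simp only [Set.mem_Icc] at hmem
        by_cases hle : a ≤ 0
        · rw [hKcdef]
          dsimp only
          rw [if_pos hle, zero_mul]
          positivity
        · have hapos : (0:ℝ) < a := not_le.mp hle
          have hKa : Kc a = β a * Real.exp (-μ * a) := by
            rw [hKcdef]; dsimp only; rw [if_neg hle]
          show Kc a * b (t - a) ≤ Cβ * (α * Real.exp (-1)) * Real.exp (-μ * a)
          rw [hKa]
          have hbb : b (t - a) ≤ α * Real.exp (-1) := hble _ (by linarith [hmem.2])
          calc β a * Real.exp (-μ * a) * b (t - a)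
              ≤ β a * Real.exp (-μ * a) * (α * Real.exp (-1)) :=
                mul_le_mul_of_nonneg_left hbb
                  (mul_nonneg (hβnonneg a) (Real.exp_pos _).le)
            _ ≤ Cβ * Real.exp (-μ * a) * (α * Real.exp (-1)) := by
                apply mul_le_mul_of_nonneg_right _ (by positivity)
                exact mul_le_mul_of_nonneg_right (hA hapos) (Real.exp_pos _).le
            _ = Cβ * (α * Real.exp (-1)) * Real.exp (-μ * a) := by ring
      have hmono := intervalIntegral.integral_mono_ae_restrict ht
        (hconv b hbcont t ht) hg hae
      have hcomp : (∫ a in (0:ℝ)..t, Cβ * (α * Real.exp (-1)) * Real.exp (-μ * a))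
          = Cβ * (α * Real.exp (-1)) * ((1 - Real.exp (-μ * t)) / μ) := by
        rw [intervalIntegral.integral_const_mul, exp_integral μ t hμ]
      rw [hcomp] at hmono
      refine le_trans hmono (le_of_eq ?_)
      rw [hΛ, Real.exp_neg]
      field_simp
    have hE1 : Real.exp (-μ * t) ≤ 1 := Real.exp_le_one_iff.mpr (by nlinarith)
    have hE0 : (0:ℝ) < Real.exp (-μ * t) := Real.exp_pos _
    have hU₀Mx : U₀ ≤ Mx := le_max_left _ _
    have hΛMx : Λ ≤ Mx := le_max_right _ _
    have hA1 : Real.exp (-μ * t) * I₀ t ≤ Real.exp (-μ * t) * (Cβ * Mx) := by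
      apply mul_le_mul_of_nonneg_left _ hE0.le
      calc I₀ t ≤ Cβ * U₀ := h1
        _ ≤ Cβ * Mx := by nlinarith [le_max_left U₀ Λ]
    have hA3 : Cβ * Λ * (1 - Real.exp (-μ * t)) ≤ Cβ * Mx * (1 - Real.exp (-μ * t)) := by
      apply mul_le_mul_of_nonneg_right _ (by linarith)
      nlinarith [le_max_right U₀ Λ]
    have hXval : X t = Real.exp (-μ * t) * I₀ t + ∫ a in (0:ℝ)..t, Kc a * b (t - a) := rfl
    rw [hXval]
    nlinarith [hA1, hA3, h2]
  -- nonlinear positivity via the Volterra lemma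
  have hb0 : 0 ≤ b 0 := by
    have hX0 : 0 ≤ X 0 := by
      have : X 0 = Real.exp (-μ * 0) * I₀ 0 + ∫ a in (0:ℝ)..(0:ℝ), Kc a * b (0 - a) := rfl
      rw [this, intervalIntegral.integral_same, add_zero]
      exact mul_nonneg (Real.exp_pos _).le (hI₀nn 0)
    rw [hbX 0 le_rfl]
    exact mul_nonneg hα.le (mul_nonneg hX0 (Real.exp_pos _).le)
  have hbnn : ∀ t, 0 ≤ t → 0 ≤ b t := by
    apply volterra_nonneg b F (α * Real.exp 1) hbcont hFcont.continuousWithinAt hF0 hb0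
    intro t0 t m ht0 htt hm1 hm0 hp1 hp2
    have ht : (0:ℝ) ≤ t := le_trans ht0 htt
    have hJ : m * F (t - t0) ≤ ∫ a in (0:ℝ)..t, Kc a * b (t - a) :=
      conv_lower_bound Kc b hKc0 hKcint t0 t m ht0 htt hm0 (hconv b hbcont t ht) hp1 hp2
    have hXlb : m * F (t - t0) ≤ X t := by
      have h0 : 0 ≤ Real.exp (-μ * t) * I₀ t := mul_nonneg (Real.exp_pos _).le (hI₀nn t)
      have hXval : X t = Real.exp (-μ * t) * I₀ t + ∫ a in (0:ℝ)..t, Kc a * b (t - a) := rfl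
      rw [hXval]; linarith
    rw [hbX t ht]
    have hFt := hFnn (t - t0) (by linarith)
    have hFt1 := hFle1 (t - t0) (by linarith)
    rcases le_or_gt 0 (X t) with hX0 | hX0
    · have hrhs : 0 ≤ α * (X t * Real.exp (-(X t))) :=
        mul_nonneg hα.le (mul_nonneg hX0 (Real.exp_pos _).le)
      have hlhs : m * (α * Real.exp 1 * F (t - t0)) ≤ 0 :=
        mul_nonpos_of_nonpos_of_nonneg hm0 (by positivity)
      linarith
    · have hexp : Real.exp (-(X t)) ≤ Real.exp 1 := Real.exp_le_exp.mpr (by nlinarith)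
      have h1 : m * F (t - t0) * Real.exp (-(X t)) ≤ X t * Real.exp (-(X t)) :=
        mul_le_mul_of_nonneg_right hXlb (Real.exp_pos _).le
      have h2 : m * F (t - t0) * Real.exp 1 ≤ m * F (t - t0) * Real.exp (-(X t)) :=
        mul_le_mul_of_nonpos_left hexp (by nlinarith : m * F (t - t0) ≤ 0)
      calc m * (α * Real.exp 1 * F (t - t0)) = α * (m * F (t - t0) * Real.exp 1) := by ring
        _ ≤ α * (X t * Real.exp (-(X t))) :=
          mul_le_mul_of_nonneg_left (h2.trans h1) hα.le
  -- positivity of X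
  have hXnn : ∀ t, 0 ≤ t → 0 ≤ X t := by
    intro t ht
    have hJ : 0 ≤ ∫ a in (0:ℝ)..t, Kc a * b (t - a) := by
      apply intervalIntegral.integral_nonneg ht
      intro a ha
      exact mul_nonneg (hKc0 a) (hbnn (t - a) (by linarith [ha.2]))
    have hXval : X t = Real.exp (-μ * t) * I₀ t + ∫ a in (0:ℝ)..t, Kc a * b (t - a) := rfl
    rw [hXval]
    have := mul_nonneg (Real.exp_pos (-μ * t)).le (hI₀nn t)
    linarith
  -- upper comparison
  have hdpnn : ∀ t, 0 ≤ t → 0 ≤ bp t - b t := by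
    apply volterra_nonneg (fun s => bp s - b s) F (α * Real.exp 1) (hbpcont.sub hbcont)
      hFcont.continuousWithinAt hF0
    · have h0 : Xp 0 = X 0 := by
        rw [hXpdef, hXdef]
        dsimp only
        rw [intervalIntegral.integral_same, intervalIntegral.integral_same]
      rw [hbpX 0 le_rfl, hbX 0 le_rfl, h0]
      have := f_le_self (X 0)
      nlinarith
    · intro t0 t m ht0 htt hm1 hm0 hp1 hp2
      have ht : (0:ℝ) ≤ t := le_trans ht0 htt
      have hdcont : ContinuousOn (fun s => bp s - b s) (Set.Ici 0) := hbpcont.sub hbcont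
      have hJ : m * F (t - t0) ≤ ∫ a in (0:ℝ)..t, Kc a * (bp (t - a) - b (t - a)) :=
        conv_lower_bound Kc (fun s => bp s - b s) hKc0 hKcint t0 t m ht0 htt hm0
          (hconv _ hdcont t ht) hp1 hp2
      have hdiff : Xp t - X t = ∫ a in (0:ℝ)..t, Kc a * (bp (t - a) - b (t - a)) := by
        have hsub := intervalIntegral.integral_sub (hconv bp hbpcont t ht) (hconv b hbcont t ht)
        have hXpval : Xp t = Real.exp (-μ * t) * I₀ t + ∫ a in (0:ℝ)..t, Kc a * bp (t - a) := rfl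
        have hXval : X t = Real.exp (-μ * t) * I₀ t + ∫ a in (0:ℝ)..t, Kc a * b (t - a) := rfl
        rw [hXpval, hXval]
        have : (∫ a in (0:ℝ)..t, Kc a * (bp (t - a) - b (t - a)))
            = ∫ a in (0:ℝ)..t, (Kc a * bp (t - a) - Kc a * b (t - a)) := by
          congr 1
          funext a
          ring
        rw [this, hsub]
        ring
      have hmFle : m * F (t - t0) ≤ Xp t - X t := by rw [hdiff]; exact hJ
      have hfle := f_le_self (X t)
      have hdpt : α * (Xp t - X t) ≤ bp t - b t := by
        rw [hbpX t ht, hbX t ht]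
        nlinarith
      have hmF0 : m * F (t - t0) ≤ 0 :=
        mul_nonpos_of_nonpos_of_nonneg hm0 (hFnn (t - t0) (by linarith))
      calc m * (α * Real.exp 1 * F (t - t0)) = α * (m * F (t - t0)) * Real.exp 1 := by ring
        _ ≤ α * (m * F (t - t0)) * 1 := by
          apply mul_le_mul_of_nonpos_left he1 (by nlinarith : α * (m * F (t - t0)) ≤ 0)
        _ = α * (m * F (t - t0)) := mul_one _
        _ ≤ α * (Xp t - X t) := mul_le_mul_of_nonneg_left hmFle hα.le
        _ ≤ bp t - b t := hdpt
  -- lower comparison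
  have hdmnn : ∀ t, 0 ≤ t → 0 ≤ b t - bm t := by
    apply volterra_nonneg (fun s => b s - bm s) F (α * Real.exp 1) (hbcont.sub hbmcont)
      hFcont.continuousWithinAt hF0
    · have h0 : Xm 0 = X 0 := by
        rw [hXmdef, hXdef]
        dsimp only
        rw [intervalIntegral.integral_same, intervalIntegral.integral_same]
      have hX00 : 0 ≤ X 0 := hXnn 0 le_rfl
      have hX0M : X 0 ≤ Cβ * Mx := hXub 0 le_rfl
      have hee : δm ≤ Real.exp (-(X 0)) := by
        rw [hδm_eq]
        exact Real.exp_le_exp.mpr (by linarith)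
      rw [hbX 0 le_rfl, hbmX 0 le_rfl, h0]
      have hkey0 : δm * X 0 ≤ X 0 * Real.exp (-(X 0)) := by
        calc δm * X 0 = X 0 * δm := mul_comm _ _
          _ ≤ X 0 * Real.exp (-(X 0)) := mul_le_mul_of_nonneg_left hee hX00
      nlinarith [mul_le_mul_of_nonneg_left hkey0 hα.le]
    · intro t0 t m ht0 htt hm1 hm0 hp1 hp2
      have ht : (0:ℝ) ≤ t := le_trans ht0 htt
      have hdcont : ContinuousOn (fun s => b s - bm s) (Set.Ici 0) := hbcont.sub hbmcont
      have hJ : m * F (t - t0) ≤ ∫ a in (0:ℝ)..t, Kc a * (b (t - a) - bm (t - a)) :=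
        conv_lower_bound Kc (fun s => b s - bm s) hKc0 hKcint t0 t m ht0 htt hm0
          (hconv _ hdcont t ht) hp1 hp2
      have hdiff : X t - Xm t = ∫ a in (0:ℝ)..t, Kc a * (b (t - a) - bm (t - a)) := by
        have hsub := intervalIntegral.integral_sub (hconv b hbcont t ht) (hconv bm hbmcont t ht)
        have hXmval : Xm t = Real.exp (-μ * t) * I₀ t + ∫ a in (0:ℝ)..t, Kc a * bm (t - a) := rfl
        have hXval : X t = Real.exp (-μ * t) * I₀ t + ∫ a in (0:ℝ)..t, Kc a * b (t - a) := rfl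
        rw [hXmval, hXval]
        have : (∫ a in (0:ℝ)..t, Kc a * (b (t - a) - bm (t - a)))
            = ∫ a in (0:ℝ)..t, (Kc a * b (t - a) - Kc a * bm (t - a)) := by
          congr 1
          funext a
          ring
        rw [this, hsub]
        ring
      have hmFle : m * F (t - t0) ≤ X t - Xm t := by rw [hdiff]; exact hJ
      have hXtnn : 0 ≤ X t := hXnn t ht
      have hXtM : X t ≤ Cβ * Mx := hXub t ht
      have hee : δm ≤ Real.exp (-(X t)) := by
        rw [hδm_eq]
        exact Real.exp_le_exp.mpr (by linarith)
      have hkey : δm * X t ≤ X t * Real.exp (-(X t)) := by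
        calc δm * X t = X t * δm := mul_comm _ _
          _ ≤ X t * Real.exp (-(X t)) := mul_le_mul_of_nonneg_left hee hXtnn
      have hdmt : α * δm * (X t - Xm t) ≤ b t - bm t := by
        rw [hbX t ht, hbmX t ht]
        nlinarith
      have hmF0 : m * F (t - t0) ≤ 0 :=
        mul_nonpos_of_nonpos_of_nonneg hm0 (hFnn (t - t0) (by linarith))
      have hαδ : α * δm ≤ α * Real.exp 1 := by nlinarith
      calc m * (α * Real.exp 1 * F (t - t0)) = (m * F (t - t0)) * (α * Real.exp 1) := by ring
        _ ≤ (m * F (t - t0)) * (α * δm) := mul_le_mul_of_nonpos_left hαδ hmF0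
        _ = α * δm * (m * F (t - t0)) := by ring
        _ ≤ α * δm * (X t - Xm t) :=
          mul_le_mul_of_nonneg_left hmFle (by positivity)
        _ ≤ b t - bm t := hdmt
  -- conclusion
  intro t ht
  apply Eventually.of_forall
  intro a
  rw [hum t a, hu t a, hup t a]
  by_cases hta : t ≤ a
  · simp only [if_pos hta]
    exact ⟨le_rfl, le_rfl⟩
  · simp only [if_neg hta]
    have hta' : a < t := not_le.mp hta
    have h1 : (0:ℝ) ≤ t - a := by linarith
    constructor
    · exact mul_le_mul_of_nonneg_left (by linarith [hdmnn (t - a) h1]) (Real.exp_pos _).le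
    · exact mul_le_mul_of_nonneg_left (by linarith [hdpnn (t - a) h1]) (Real.exp_pos _).le
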